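/- Let λ be an m-partition of r with removable nodes R_λ, and for n ∈ R_λ let j_n be the entry at node n in the column-filled tableau t_λ, and let λ_n be the m-partition obtained by removing node n. Then the tableau obtained by removing the entry r from t_λ · s_{j_n, r} equals t_{λ_n} (the column-filled tableau of λ_n). -/

import Mathlib

noncomputable section
open scoped Classical
open Finset

def pApp {r : ℕ} (w : Equiv.Perm (Fin r)) (x : ℕ) : ℕ :=
  if h : x < r then (w ⟨x, h⟩ : ℕ) else x

def blockOf (c : List ℕ) (x : ℕ) : ℕ :=
  ((Finset.range c.length).filter (fun i => (c.take (i + 1)).sum ≤ x)).card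

def inYoung {r : ℕ} (c : List ℕ) (w : Equiv.Perm (Fin r)) : Prop :=
  ∀ x : Fin r, blockOf c (pApp w (x : ℕ)) = blockOf c (x : ℕ)

def conjP (l : List ℕ) : List ℕ :=
  (List.range (l.foldr max 0)).map (fun i => l.countP (fun p => decide (i < p)))

def IsPartition (l : List ℕ) : Prop :=
  l.Pairwise (· ≥ ·) ∧ ∀ p ∈ l, 0 < p

/-- The `i`-th part (0-indexed row `i` of component `k`) of a multipartition. -/
def part (L : List (List ℕ)) (k i : ℕ) : ℕ := (L.getD k []).getD i 0

/-- `(k,i,j)` (all 0-indexed) is a node of the Young diagram of the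
multipartition `L`. -/
def mpMem (L : List (List ℕ)) (p : ℕ × ℕ × ℕ) : Prop :=
  p.2.2 < part L p.1 p.2.1

/-- The Finset of nodes of the Young diagram of `L`. -/
def mpNodes (L : List (List ℕ)) : Finset (ℕ × ℕ × ℕ) :=
  (Finset.range L.length ×ˢ
      Finset.range (L.flatten.sum + L.flatten.length + 1) ×ˢ
      Finset.range (L.flatten.sum + L.flatten.length + 1)).filter (fun p => mpMem L p)

/-- Row-reading order on nodes: components in order, rows top to bottom,
within a row left to right. -/
def rowLt (p q : ℕ × ℕ × ℕ) : Prop :=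
  p.1 < q.1 ∨ (p.1 = q.1 ∧ (p.2.1 < q.2.1 ∨ (p.2.1 = q.2.1 ∧ p.2.2 < q.2.2)))

/-- Column-reading order on nodes: components in reverse order, columns left to
right, within a column top to bottom. -/
def colLt (p q : ℕ × ℕ × ℕ) : Prop :=
  q.1 < p.1 ∨ (p.1 = q.1 ∧ (p.2.2 < q.2.2 ∨ (p.2.2 = q.2.2 ∧ p.2.1 < q.2.1)))

/-- The (0-indexed) entry at node `p` of the row-filled tableau `t^λ`. -/
def rowRank (L : List (List ℕ)) (p : ℕ × ℕ × ℕ) : ℕ :=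
  ((mpNodes L).filter (fun q => rowLt q p)).card

/-- The (0-indexed) entry at node `p` of the column-filled tableau `t_λ`. -/
def colRank (L : List (List ℕ)) (p : ℕ × ℕ × ℕ) : ℕ :=
  ((mpNodes L).filter (fun q => colLt q p)).card

/-- `w` is the permutation `w_λ` defined by `t^λ w_λ = t_λ`. -/
def wprop {r : ℕ} (L : List (List ℕ)) (w : Equiv.Perm (Fin r)) : Prop :=
  ∀ p ∈ mpNodes L, pApp w (rowRank L p) = colRank L p

/-- The concatenation `λ̄'` of the dual multipartition `λ' = (λ^(m)′,…,λ^(1)′)`. -/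
def dualConcat (L : List (List ℕ)) : List ℕ := (L.reverse.map conjP).flatten


/-- `(k,i,j)` is a removable node of the multipartition `L`. -/
def isRemovableNode (L : List (List ℕ)) (p : ℕ × ℕ × ℕ) : Prop :=
  p.2.2 + 1 = part L p.1 p.2.1 ∧ part L p.1 (p.2.1 + 1) < part L p.1 p.2.1

/-- The multipartition obtained from `L` by removing the removable node `p`. -/
def removeNode (L : List (List ℕ)) (p : ℕ × ℕ × ℕ) : List (List ℕ) :=
  L.set p.1 ((L.getD p.1 []).set p.2.1 (part L p.1 p.2.1 - 1))

/-- `s` is the cycle `s_{a,b}` (0-indexed) of `Fin r`, sending `a` to `b`,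
`x` to `x-1` for `a < x ≤ b`, and fixing everything else. -/
def IsCyc {r : ℕ} (s : Equiv.Perm (Fin r)) (a b : ℕ) : Prop :=
  a ≤ b ∧ b < r ∧ pApp s a = b ∧
    (∀ x, a < x → x ≤ b → pApp s x = x - 1) ∧
    (∀ x, x < a ∨ b < x → pApp s x = x)


lemma colLt_trans' {p q t : ℕ × ℕ × ℕ} (h1 : colLt p q) (h2 : colLt q t) : colLt p t := by
  unfold colLt at *; omega

lemma colLt_irrefl' (p : ℕ × ℕ × ℕ) : ¬ colLt p p := by unfold colLt; omega

lemma colLt_trichot' (p q : ℕ × ℕ × ℕ) : colLt p q ∨ p = q ∨ colLt q p := by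
  obtain ⟨a, b, c⟩ := p; obtain ⟨d, e, f⟩ := q
  simp only [colLt, Prod.mk.injEq]
  omega

lemma sum_le_flatten' (L : List (List ℕ)) {l : List ℕ} (h : l ∈ L) :
    l.sum ≤ L.flatten.sum := by
  induction L with
  | nil => simp at h
  | cons a T ih =>
    rw [List.flatten_cons, List.sum_append]
    rcases List.mem_cons.mp h with rfl | h
    · omega
    · have := ih h; omega

lemma length_le_flatten' (L : List (List ℕ)) {l : List ℕ} (h : l ∈ L) :
    l.length ≤ L.flatten.length := by
  induction L with
  | nil => simp at h
  | cons a T ih =>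
    rw [List.flatten_cons, List.length_append]
    rcases List.mem_cons.mp h with rfl | h
    · omega
    · have := ih h; omega

lemma part_pos_facts' {L : List (List ℕ)} {k i : ℕ} (h : 0 < part L k i) :
    k < L.length ∧ i < (L.getD k []).length ∧ part L k i ≤ L.flatten.sum := by
  unfold part at *
  by_cases hk : k < L.length
  · by_cases hi : i < (L.getD k []).length
    · refine ⟨hk, hi, ?_⟩
      have hmem : L.getD k [] ∈ L := by
        rw [List.getD_eq_getElem _ _ hk]; exact List.getElem_mem hk
      have h1 : (L.getD k []).getD i 0 ∈ L.getD k [] := by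
        rw [List.getD_eq_getElem _ _ hi]; exact List.getElem_mem hi
      have h2 : (L.getD k []).getD i 0 ≤ (L.getD k []).sum :=
        List.single_le_sum (fun x _ => Nat.zero_le x) _ h1
      exact h2.trans (sum_le_flatten' L hmem)
    · rw [List.getD_eq_default _ _ (Nat.le_of_not_lt hi)] at h; omega
  · rw [List.getD_eq_default _ _ (Nat.le_of_not_lt hk)] at h
    rw [List.getD_eq_default _ _ (Nat.zero_le i)] at h; omega

lemma mem_mpNodes' {L : List (List ℕ)} {p : ℕ × ℕ × ℕ} :
    p ∈ mpNodes L ↔ mpMem L p := by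
  constructor
  · exact fun h => (Finset.mem_filter.mp h).2
  · intro h
    have hlt : p.2.2 < part L p.1 p.2.1 := h
    have hpos : 0 < part L p.1 p.2.1 := by omega
    obtain ⟨hk, hi, hle⟩ := part_pos_facts' hpos
    have hlen : (L.getD p.1 []).length ≤ L.flatten.length :=
      length_le_flatten' L (by rw [List.getD_eq_getElem _ _ hk]; exact List.getElem_mem hk)
    refine Finset.mem_filter.mpr ⟨?_, h⟩
    refine Finset.mem_product.mpr ⟨Finset.mem_range.mpr hk, Finset.mem_product.mpr ⟨?_, ?_⟩⟩
    · exact Finset.mem_range.mpr (by omega)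
    · exact Finset.mem_range.mpr (by omega)

lemma sum_getD_le' (l : List ℕ) (N : ℕ) :
    (∑ i ∈ Finset.range N, l.getD i 0) ≤ l.sum := by
  induction l generalizing N with
  | nil =>
    have h0 : ∀ i ∈ Finset.range N, ([] : List ℕ).getD i 0 = 0 :=
      fun i _ => List.getD_eq_default _ _ (Nat.zero_le i)
    rw [Finset.sum_eq_zero h0]
    simp
  | cons a t ih =>
    cases N with
    | zero => simp
    | succ N =>
      rw [Finset.sum_range_succ']
      simp only [List.getD_cons_succ, List.getD_cons_zero, List.sum_cons]
      have := ih N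
      omega

lemma sum_comp' (L : List (List ℕ)) :
    (∑ k ∈ Finset.range L.length, (L.getD k []).sum) = L.flatten.sum := by
  induction L with
  | nil => simp
  | cons a T ih =>
    rw [List.length_cons, Finset.sum_range_succ', List.flatten_cons, List.sum_append]
    simp only [List.getD_cons_succ, List.getD_cons_zero]
    omega

lemma card_mpNodes_le' (L : List (List ℕ)) : (mpNodes L).card ≤ L.flatten.sum := by
  set N := L.flatten.sum + L.flatten.length + 1 with hN
  have h1 : (mpNodes L).card
      = ∑ k ∈ Finset.range L.length, ∑ i ∈ Finset.range N, ∑ j ∈ Finset.range N,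
          if mpMem L (k, i, j) then 1 else 0 := by
    rw [mpNodes, Finset.card_filter, Finset.sum_product]
    refine Finset.sum_congr rfl fun k _ => ?_
    rw [Finset.sum_product]
  rw [h1, ← sum_comp' L]
  refine Finset.sum_le_sum fun k _ => ?_
  have h2 : ∀ i, (∑ j ∈ Finset.range N, if mpMem L (k, i, j) then 1 else 0) ≤ part L k i := by
    intro i
    have hc : (∑ j ∈ Finset.range N, if mpMem L (k, i, j) then 1 else 0)
        = ((Finset.range N).filter (fun j => mpMem L (k, i, j))).card :=
      (Finset.card_filter _ _).symm
    rw [hc]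
    have hsub : (Finset.range N).filter (fun j => mpMem L (k, i, j))
        ⊆ Finset.range (part L k i) := by
      intro j hj
      simp only [Finset.mem_filter, Finset.mem_range] at hj ⊢
      exact hj.2
    calc _ ≤ (Finset.range (part L k i)).card := Finset.card_le_card hsub
      _ = part L k i := Finset.card_range _
  calc (∑ i ∈ Finset.range N, ∑ j ∈ Finset.range N, if mpMem L (k, i, j) then 1 else 0)
      ≤ ∑ i ∈ Finset.range N, part L k i := Finset.sum_le_sum fun i _ => h2 i
    _ ≤ (L.getD k []).sum := by unfold part; exact sum_getD_le' _ _

lemma getD_set_ne' {α : Type*} (l : List α) (a : ℕ) (v : α) (i : ℕ) (d : α) (h : a ≠ i) :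
    (l.set a v).getD i d = l.getD i d := by
  by_cases hi : i < l.length
  · rw [List.getD_eq_getElem _ _ (by simpa using hi), List.getD_eq_getElem _ _ hi,
      List.getElem_set_ne h]
  · rw [List.getD_eq_default _ _ (by simpa using Nat.le_of_not_lt hi),
      List.getD_eq_default _ _ (Nat.le_of_not_lt hi)]

lemma part_removeNode' {L : List (List ℕ)} {n : ℕ × ℕ × ℕ} (hn : isRemovableNode L n)
    (k i : ℕ) :
    part (removeNode L n) k i = if k = n.1 ∧ i = n.2.1 then n.2.2 else part L k i := by
  have hpos : 0 < part L n.1 n.2.1 := by have := hn.1; omega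
  obtain ⟨hk, hi, -⟩ := part_pos_facts' hpos
  unfold removeNode
  conv_lhs => unfold part
  by_cases hkk : k = n.1
  · subst hkk
    have h1 : (L.set n.1 ((L.getD n.1 []).set n.2.1 ((L.getD n.1 []).getD n.2.1 0 - 1))).getD n.1 []
        = (L.getD n.1 []).set n.2.1 ((L.getD n.1 []).getD n.2.1 0 - 1) := by
      rw [List.getD_eq_getElem _ _ (by simpa using hk), List.getElem_set_self]
    rw [h1]
    by_cases hii : i = n.2.1
    · subst hii
      rw [List.getD_eq_getElem _ _ (by simpa using hi), List.getElem_set_self,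
        if_pos ⟨rfl, rfl⟩]
      have h2 := hn.1
      unfold part at h2 hpos
      omega
    · rw [getD_set_ne' _ _ _ _ _ (fun hc => hii hc.symm),
        if_neg (fun hc => hii hc.2)]
      rfl
  · rw [getD_set_ne' _ _ _ _ _ (fun hc => hkk hc.symm),
      if_neg (fun hc => hkk hc.1)]
    rfl

lemma mpMem_removeNode' {L : List (List ℕ)} {n : ℕ × ℕ × ℕ} (hn : isRemovableNode L n)
    (p : ℕ × ℕ × ℕ) : mpMem (removeNode L n) p ↔ mpMem L p ∧ p ≠ n := by
  obtain ⟨k, i, j⟩ := p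
  have key : mpMem (removeNode L n) (k, i, j)
      ↔ j < (if k = n.1 ∧ i = n.2.1 then n.2.2 else part L k i) := by
    unfold mpMem
    rw [part_removeNode' hn]
  rw [key]
  have hmm : mpMem L (k, i, j) ↔ j < part L k i := Iff.rfl
  rw [hmm]
  by_cases h : k = n.1 ∧ i = n.2.1
  · obtain ⟨hk, hi⟩ := h
    rw [if_pos ⟨hk, hi⟩]
    have h1 : n.2.2 + 1 = part L n.1 n.2.1 := hn.1
    subst hk; subst hi
    constructor
    · intro hj
      refine ⟨by omega, fun hc => ?_⟩
      have : j = n.2.2 := by rw [← hc]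
      omega
    · rintro ⟨hj, hne⟩
      rcases Nat.lt_or_ge j n.2.2 with h' | h'
      · exact h'
      · exfalso; apply hne
        have hje : j = n.2.2 := by omega
        subst hje
        exact Prod.ext rfl (Prod.ext rfl rfl)
  · rw [if_neg h]
    constructor
    · intro hj
      refine ⟨hj, fun hc => ?_⟩
      apply h
      constructor
      · rw [← hc]
      · rw [← hc]
    · exact fun hx => hx.1

lemma mpNodes_removeNode' {L : List (List ℕ)} {n : ℕ × ℕ × ℕ} (hn : isRemovableNode L n) :
    mpNodes (removeNode L n) = (mpNodes L).erase n := by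
  ext p
  rw [mem_mpNodes', Finset.mem_erase, mem_mpNodes', mpMem_removeNode' hn]
  tauto

lemma colRank_lt' {L : List (List ℕ)} {p q : ℕ × ℕ × ℕ} (hp : p ∈ mpNodes L)
    (h : colLt p q) : colRank L p < colRank L q := by
  have hsub : (mpNodes L).filter (fun x => colLt x p)
      ⊆ (mpNodes L).filter (fun x => colLt x q) := by
    intro x hx
    rw [Finset.mem_filter] at hx ⊢
    exact ⟨hx.1, colLt_trans' hx.2 h⟩
  have hss : (mpNodes L).filter (fun x => colLt x p)
      ⊂ (mpNodes L).filter (fun x => colLt x q) := by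
    rw [Finset.ssubset_iff_of_subset hsub]
    exact ⟨p, Finset.mem_filter.mpr ⟨hp, h⟩,
      fun hc => colLt_irrefl' p (Finset.mem_filter.mp hc).2⟩
  exact Finset.card_lt_card hss

lemma colRank_lt_card' {L : List (List ℕ)} {p : ℕ × ℕ × ℕ} (hp : p ∈ mpNodes L) :
    colRank L p < (mpNodes L).card := by
  apply Finset.card_lt_card
  rw [Finset.ssubset_iff_of_subset (Finset.filter_subset _ _)]
  exact ⟨p, hp, fun hc => colLt_irrefl' p (Finset.mem_filter.mp hc).2⟩

lemma colRank_removeNode' {L : List (List ℕ)} {n : ℕ × ℕ × ℕ} (hn : isRemovableNode L n)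
    (hnn : n ∈ mpNodes L) (p : ℕ × ℕ × ℕ) :
    colRank (removeNode L n) p = if colLt n p then colRank L p - 1 else colRank L p := by
  unfold colRank
  rw [mpNodes_removeNode' hn, Finset.filter_erase]
  by_cases h : colLt n p
  · rw [if_pos h]
    have hm : n ∈ (mpNodes L).filter (fun q => colLt q p) := Finset.mem_filter.mpr ⟨hnn, h⟩
    rw [Finset.card_erase_of_mem hm]
  · rw [if_neg h]
    have hm : n ∉ (mpNodes L).filter (fun q => colLt q p) :=
      fun hc => h (Finset.mem_filter.mp hc).2
    rw [Finset.erase_eq_of_notMem hm]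

/-- (3.3a): removing the entry `r` (0-indexed: `r-1`) from the
tableau `t_λ · s_{j_n, r}` yields the column-filled tableau `t_{λ_n}`:
on every node `p` of `λ_n`, the entry `s_{j_n,r}(t_λ(p))` equals `t_{λ_n}(p)`.
Here `j_n = colRank L n` is the (0-indexed) entry at `n` in `t_λ`. -/
theorem stmt5 (r : ℕ) (L : List (List ℕ))
    (hL : ∀ l ∈ L, IsPartition l) (hr : L.flatten.sum = r)
    (n : ℕ × ℕ × ℕ) (hn : isRemovableNode L n)
    (s : Equiv.Perm (Fin r)) (hs : IsCyc s (colRank L n) (r - 1)) :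
    ∀ p, mpMem (removeNode L n) p →
      pApp s (colRank L p) = colRank (removeNode L n) p := by
  intro p hp
  obtain ⟨hle, hbr, hsa, hmid, hfix⟩ := hs
  have hpN' : mpMem L p ∧ p ≠ n := (mpMem_removeNode' hn p).mp hp
  have hpN : p ∈ mpNodes L := mem_mpNodes'.mpr hpN'.1
  have hnN : n ∈ mpNodes L := by
    apply mem_mpNodes'.mpr
    have h1 : n.2.2 + 1 = part L n.1 n.2.1 := hn.1
    show n.2.2 < part L n.1 n.2.1
    omega
  have hcard : (mpNodes L).card ≤ r := hr ▸ card_mpNodes_le' L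
  have hxr : colRank L p < r := lt_of_lt_of_le (colRank_lt_card' hpN) hcard
  rcases colLt_trichot' p n with h | h | h
  · have hnp : ¬ colLt n p := fun hc => colLt_irrefl' p (colLt_trans' h hc)
    rw [hfix _ (Or.inl (colRank_lt' hpN h)), colRank_removeNode' hn hnN p, if_neg hnp]
  · exact absurd h hpN'.2
  · have hlt : colRank L n < colRank L p := colRank_lt' hnN h
    rw [hmid _ hlt (by omega), colRank_removeNode' hn hnN p, if_pos h]
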